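/- Given a generalized metric 𝒢 on E = g ⊕ g* (symmetric bilinear form whose associated endomorphism 𝒢^end = 𝒢^{-1} ∘ ⟨·,·⟩ is an involution and whose restriction to Sym²g* is nondegenerate), there exist a nondegenerate symmetric bilinear form g ∈ Sym²g* and a 2-form β ∈ Λ²g* such that 𝒢 = exp(−B)* 𝒢_g, where B is the endomorphism X+ξ ↦ βX of E and 𝒢_g(X+ξ, Y+η) = (1/2)(g(X,Y) + g^{-1}(ξ,η)). In particular, any generalized metric is the pullback of one induced by a pseudo-Riemannian metric under a B-field transformation. -/
import Mathlib


/-!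
STATEMENT 2: Any generalized metric `𝒢` on `E = g ⊕ g*` (symmetric bilinear form whose
associated endomorphism `𝒢^end`, defined by `⟨𝒢^end u, v⟩ = 𝒢(u,v)` w.r.t. the canonical
pairing `⟨X+ξ, Y+η⟩ = (1/2)(ξ(Y)+η(X))`, is an involution, and whose restriction to
`Sym² g*` is nondegenerate) is of the form `𝒢 = exp(−B)* 𝒢_g` for a nondegenerate symmetric
bilinear form `g` (encoded as a symmetric linear equivalence `g : V ≃ V*`) and a 2-form `β`,
where `exp(−B)(X+ξ) = X + ξ − β(X,·)` and
`𝒢_g(X+ξ, Y+η) = (1/2)(g(X,Y) + g⁻¹(ξ,η))`.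
-/
theorem generalized_metric_normal_form
    {V : Type*} [AddCommGroup V] [Module ℝ V] [FiniteDimensional ℝ V]
    (𝒢 : (V × Module.Dual ℝ V) →ₗ[ℝ] (V × Module.Dual ℝ V) →ₗ[ℝ] ℝ)
    (Gend : (V × Module.Dual ℝ V) →ₗ[ℝ] (V × Module.Dual ℝ V))
    (hsymm : ∀ u v, 𝒢 u v = 𝒢 v u)
    (hend : ∀ u v, ((Gend u).2 v.1 + v.2 (Gend u).1) / 2 = 𝒢 u v)
    (hinv : ∀ u, Gend (Gend u) = u)
    (hnd : ∀ ξ : Module.Dual ℝ V,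
      (∀ η : Module.Dual ℝ V, 𝒢 (0, ξ) (0, η) = 0) → ξ = 0) :
    ∃ (g : V ≃ₗ[ℝ] Module.Dual ℝ V) (β : V →ₗ[ℝ] Module.Dual ℝ V),
      (∀ x y : V, g x y = g y x) ∧
      (∀ x y : V, β x y = - β y x) ∧
      ∀ (X Y : V) (ξ η : Module.Dual ℝ V),
        𝒢 (X, ξ) (Y, η)
          = (g X Y + (η - β Y) (g.symm (ξ - β X))) / 2 := by
  classical
  set a : V →ₗ[ℝ] V :=
    (LinearMap.fst ℝ V (Module.Dual ℝ V)) ∘ₗ Gend ∘ₗ (LinearMap.inl ℝ V (Module.Dual ℝ V))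
    with ha
  set b : Module.Dual ℝ V →ₗ[ℝ] V :=
    (LinearMap.fst ℝ V (Module.Dual ℝ V)) ∘ₗ Gend ∘ₗ (LinearMap.inr ℝ V (Module.Dual ℝ V))
    with hb
  set c : V →ₗ[ℝ] Module.Dual ℝ V :=
    (LinearMap.snd ℝ V (Module.Dual ℝ V)) ∘ₗ Gend ∘ₗ (LinearMap.inl ℝ V (Module.Dual ℝ V))
    with hc
  set d : Module.Dual ℝ V →ₗ[ℝ] Module.Dual ℝ V :=
    (LinearMap.snd ℝ V (Module.Dual ℝ V)) ∘ₗ Gend ∘ₗ (LinearMap.inr ℝ V (Module.Dual ℝ V))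
    with hd
  have hsplit : ∀ (X : V) (ξ : Module.Dual ℝ V),
      Gend (X, ξ) = (a X + b ξ, c X + d ξ) := by
    intro X ξ
    have h1 : ((X, ξ) : V × Module.Dual ℝ V) = (X, 0) + (0, ξ) := by simp
    rw [h1, map_add]
    simp only [ha, hb, hc, hd, LinearMap.comp_apply, LinearMap.inl_apply,
      LinearMap.inr_apply, LinearMap.fst_apply, LinearMap.snd_apply]
    rfl
  -- value of 𝒢 in block form
  have hGval : ∀ (X Y : V) (ξ η : Module.Dual ℝ V),
      𝒢 (X, ξ) (Y, η) = ((c X) Y + (d ξ) Y + η (a X) + η (b ξ)) / 2 := by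
    intro X Y ξ η
    rw [← hend (X, ξ) (Y, η), hsplit]
    simp
    ring
  -- symmetry facts
  have hbsymm : ∀ ξ η : Module.Dual ℝ V, η (b ξ) = ξ (b η) := by
    intro ξ η
    have h1 := hGval 0 0 ξ η
    have h2 := hGval 0 0 η ξ
    rw [hsymm (0, ξ) (0, η)] at h1
    simp only [map_zero, LinearMap.zero_apply] at h1 h2
    rw [h1] at h2
    linarith
  have hda : ∀ (ξ : Module.Dual ℝ V) (Y : V), (d ξ) Y = ξ (a Y) := by
    intro ξ Y
    have h1 := hGval 0 Y ξ 0
    have h2 := hGval Y 0 0 ξ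
    rw [hsymm (0, ξ) (Y, 0)] at h1
    simp only [map_zero, LinearMap.zero_apply] at h1 h2
    rw [h1] at h2
    linarith
  -- involution facts
  have hinv1V : ∀ X : V, a (a X) + b (c X) = X := by
    intro X
    have h := hinv (X, 0)
    rw [hsplit X 0] at h
    simp only [map_zero, add_zero] at h
    rw [hsplit (a X) (c X)] at h
    exact congrArg Prod.fst h
  have hinv1D : ∀ ξ : Module.Dual ℝ V, a (b ξ) + b (d ξ) = 0 := by
    intro ξ
    have h := hinv (0, ξ)
    rw [hsplit 0 ξ] at h
    simp only [map_zero, zero_add] at h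
    rw [hsplit (b ξ) (d ξ)] at h
    exact congrArg Prod.fst h
  -- b is bijective
  have hbinj : Function.Injective b := by
    rw [← LinearMap.ker_eq_bot, LinearMap.ker_eq_bot']
    intro ξ hξ
    apply hnd
    intro η
    rw [hGval]
    simp [hξ]
  have hrank : Module.finrank ℝ (Module.Dual ℝ V) = Module.finrank ℝ V :=
    Subspace.dual_finrank_eq
  set bE : Module.Dual ℝ V ≃ₗ[ℝ] V := b.linearEquivOfInjective hbinj hrank with hbE
  have hbEapp : ∀ ξ, bE ξ = b ξ := fun ξ => b.linearEquivOfInjective_apply hbinj hrank ξ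
  have hgb : ∀ ξ, bE.symm (b ξ) = ξ := by
    intro ξ; rw [← hbEapp, bE.symm_apply_apply]
  have hbg : ∀ x, b (bE.symm x) = x := by
    intro x; rw [← hbEapp, bE.apply_symm_apply]
  have hgsym : ∀ x y : V, (bE.symm x) y = (bE.symm y) x := by
    intro x y
    have h := hbsymm (bE.symm x) (bE.symm y)
    rw [hbg, hbg] at h
    exact h.symm
  have hga : ∀ x : V, bE.symm (a x) = -(d (bE.symm x)) := by
    intro x
    have h := hinv1D (bE.symm x)
    rw [hbg] at h
    have h2 : a x = -(b (d (bE.symm x))) := by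
      rw [eq_neg_iff_add_eq_zero]; exact h
    rw [h2, map_neg, hgb]
  have hanti : ∀ x y : V, (bE.symm (a x)) y = -((bE.symm (a y)) x) := by
    intro x y
    rw [hga x]
    have hh : (d (bE.symm x)) y = (bE.symm x) (a y) := hda _ _
    simp only [LinearMap.neg_apply, hh]
    rw [hgsym x (a y)]
  refine ⟨bE.symm, -(bE.symm.toLinearMap ∘ₗ a), hgsym, ?_, ?_⟩
  · -- β skew
    intro x y
    simp only [LinearMap.neg_apply, LinearMap.comp_apply, LinearEquiv.coe_coe, neg_neg]
    have := hanti x y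
    linarith
  · intro X Y ξ η
    have hc' : ∀ x : V, c x = bE.symm x - bE.symm (a (a x)) := by
      intro x
      have h := hinv1V x
      have h2 : b (c x) = x - a (a x) := by
        rw [eq_sub_iff_add_eq, add_comm]; exact h
      have h3 := congrArg bE.symm h2
      rwa [hgb, map_sub] at h3
    rw [hGval]
    have hβX : (ξ - (-(bE.symm.toLinearMap ∘ₗ a)) X) = ξ + bE.symm (a X) := by
      simp [sub_neg_eq_add]
    have hβY : (η - (-(bE.symm.toLinearMap ∘ₗ a)) Y) = η + bE.symm (a Y) := by
      simp [sub_neg_eq_add]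
    rw [hβX, hβY]
    have hsymmsymm : bE.symm.symm = bE := LinearEquiv.symm_symm bE
    rw [hsymmsymm]
    rw [hbEapp, map_add, hbg]
    simp only [LinearMap.add_apply, map_add]
    have e1 : (bE.symm (a Y)) (b ξ) = (d ξ) Y := by
      rw [hbsymm ξ (bE.symm (a Y)), hbg, ← hda]
    have e2 : (bE.symm (a Y)) (a X) = -((bE.symm (a (a X))) Y) := by
      have h1 := hanti (a X) Y
      linarith
    have e3 : (c X) Y = (bE.symm X) Y - (bE.symm (a (a X))) Y := by
      rw [hc']; simp
    rw [e1, e2, e3]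
    ring
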